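/- The function J′ is well defined (i.e. the defining integral converges absolutely) and bounded on [0, +∞) if and only if the following three conditions hold: q = 0, the support of ν is contained in [0, +∞), and ∫_{(0,∞)} y ν(dy) < ∞. -/

import Mathlib

open MeasureTheory

/-- The topological support of a measure on `ℝ`: the set of points all of whose
open neighborhoods have positive measure. -/
def measureSupport (ν : Measure ℝ) : Set ℝ :=
  {x : ℝ | ∀ U : Set ℝ, IsOpen U → x ∈ U → ν U ≠ 0}

/-- The derivative of the Laplace exponent:
`J′(z) = −a + qz + ∫ y (𝟙_{(−1,1)}(y) − e^{−zy}) ν(dy)`. -/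
noncomputable def Jprime (ν : Measure ℝ) (a q : ℝ) (z : ℝ) : ℝ :=
  -a + q * z + ∫ y, y * ((Set.Ioo (-1 : ℝ) 1).indicator 1 y - Real.exp (-(z * y))) ∂ν

namespace JprimeAux

/-- the integrand -/
noncomputable def fz (z y : ℝ) : ℝ :=
  y * ((Set.Ioo (-1 : ℝ) 1).indicator 1 y - Real.exp (-(z * y)))

lemma ind_nonneg (y : ℝ) : 0 ≤ (Set.Ioo (-1 : ℝ) 1).indicator (1 : ℝ → ℝ) y := by
  by_cases h : y ∈ Set.Ioo (-1:ℝ) 1 <;> simp [h]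

lemma ind_le_one (y : ℝ) : (Set.Ioo (-1 : ℝ) 1).indicator (1 : ℝ → ℝ) y ≤ 1 := by
  by_cases h : y ∈ Set.Ioo (-1:ℝ) 1 <;> simp [h]

lemma fz_measurable (z : ℝ) : Measurable (fz z) := by
  apply measurable_id.mul
  exact (measurable_one.indicator measurableSet_Ioo).sub
    (Real.continuous_exp.comp ((continuous_const.mul continuous_id).neg)).measurable

lemma fz_zero (z : ℝ) : fz z 0 = 0 := by simp [fz]

/-- global bound on nonnegative reals -/
lemma abs_fz_le {z : ℝ} (hz : 0 ≤ z) {y : ℝ} (hy : 0 ≤ y) : |fz z y| ≤ y := by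
  have hE0 : 0 < Real.exp (-(z*y)) := Real.exp_pos _
  have hE1 : Real.exp (-(z*y)) ≤ 1 := by
    rw [Real.exp_le_one_iff]
    nlinarith
  have habs : |(Set.Ioo (-1 : ℝ) 1).indicator (1 : ℝ → ℝ) y - Real.exp (-(z*y))| ≤ 1 := by
    rw [abs_le]
    constructor
    · have := ind_nonneg y; linarith
    · have := ind_le_one y; linarith
  calc |fz z y| = |y| * |(Set.Ioo (-1 : ℝ) 1).indicator 1 y - Real.exp (-(z*y))| := abs_mul _ _
    _ ≤ |y| * 1 := by
        exact mul_le_mul_of_nonneg_left habs (abs_nonneg _)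
    _ = y := by rw [mul_one, abs_of_nonneg hy]

lemma fz_nonneg_neg {z : ℝ} (hz : 0 ≤ z) {y : ℝ} (hy : y < 0) : 0 ≤ fz z y := by
  have hE : 1 ≤ Real.exp (-(z*y)) := by
    rw [Real.one_le_exp_iff]
    nlinarith
  have := ind_le_one y
  have h2 : (Set.Ioo (-1 : ℝ) 1).indicator (1 : ℝ → ℝ) y - Real.exp (-(z*y)) ≤ 0 := by linarith
  rw [fz]
  nlinarith

lemma fz_nonneg_pos {z : ℝ} (hz : 0 ≤ z) {y : ℝ} (hy : y ∈ Set.Ioo (0:ℝ) 1) : 0 ≤ fz z y := by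
  have hmem : y ∈ Set.Ioo (-1:ℝ) 1 := ⟨by linarith [hy.1], hy.2⟩
  have hE1 : Real.exp (-(z*y)) ≤ 1 := by
    rw [Real.exp_le_one_iff]
    nlinarith [hy.1]
  rw [fz, Set.indicator_of_mem hmem, Pi.one_apply]
  nlinarith [hy.1]

lemma fz_Ici_one {z : ℝ} {y : ℝ} (hy : (1:ℝ) ≤ y) : fz z y = -(y * Real.exp (-(z*y))) := by
  have : y ∉ Set.Ioo (-1:ℝ) 1 := fun h => absurd h.2 (not_lt.mpr hy)
  rw [fz, Set.indicator_of_notMem this]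
  ring

lemma abs_fz_Ici_one {z : ℝ} (hz : 0 ≤ z) {y : ℝ} (hy : (1:ℝ) ≤ y) : |fz z y| ≤ y := by
  exact abs_fz_le hz (by linarith)

/-- lower bound on `Iic (-δ)` -/
lemma fz_lower {z δ : ℝ} (hz : 0 ≤ z) (hδ : 0 < δ) {y : ℝ} (hy : y ≤ -δ) :
    δ * Real.exp (z * δ) - 1 ≤ fz z y := by
  have hy0 : y < 0 := by linarith
  have hE : Real.exp (z * δ) ≤ Real.exp (-(z*y)) := by
    apply Real.exp_le_exp.mpr
    nlinarith
  have h1 : δ * Real.exp (z * δ) ≤ (-y) * Real.exp (-(z*y)) := by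
    apply mul_le_mul (by linarith) hE (le_of_lt (Real.exp_pos _)) (by linarith)
  have h2 : -1 ≤ y * (Set.Ioo (-1 : ℝ) 1).indicator (1 : ℝ → ℝ) y := by
    by_cases h : y ∈ Set.Ioo (-1:ℝ) 1
    · rw [Set.indicator_of_mem h, Pi.one_apply, mul_one]; linarith [h.1]
    · rw [Set.indicator_of_notMem h, mul_zero]; norm_num
  have : fz z y = y * (Set.Ioo (-1 : ℝ) 1).indicator (1 : ℝ → ℝ) y
      + (-y) * Real.exp (-(z*y)) := by rw [fz]; ring
  rw [this]
  linarith

/-- monotonicity in `z` -/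
lemma fz_mono {z w : ℝ} (hzw : z ≤ w) (y : ℝ) : fz z y ≤ fz w y := by
  have key : 0 ≤ y * (Real.exp (-(z*y)) - Real.exp (-(w*y))) := by
    rcases le_or_gt 0 y with hy | hy
    · apply mul_nonneg hy
      have : Real.exp (-(w*y)) ≤ Real.exp (-(z*y)) := by
        apply Real.exp_le_exp.mpr; nlinarith
      linarith
    · have h3 : Real.exp (-(z*y)) ≤ Real.exp (-(w*y)) := by
        apply Real.exp_le_exp.mpr; nlinarith
      nlinarith
  have : fz w y - fz z y = y * (Real.exp (-(z*y)) - Real.exp (-(w*y))) := by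
    rw [fz, fz]; ring
  linarith

lemma fz_tendsto {y : ℝ} (hy : y ∈ Set.Ioo (0:ℝ) 1) :
    Filter.Tendsto (fun n : ℕ => fz n y) Filter.atTop (nhds y) := by
  have hy : 0 < y ∧ y < 1 := ⟨hy.1, hy.2⟩
  obtain ⟨hy, hy1⟩ := hy
  have hmem : y ∈ Set.Ioo (-1:ℝ) 1 := ⟨by linarith, hy1⟩
  have h1 : Filter.Tendsto (fun n : ℕ => Real.exp (-((n:ℝ)*y))) Filter.atTop (nhds 0) := by
    apply Real.tendsto_exp_atBot.comp
    apply Filter.tendsto_neg_atBot_iff.mpr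
    exact Filter.Tendsto.atTop_mul_const hy tendsto_natCast_atTop_atTop
  have : Filter.Tendsto (fun n : ℕ => fz n y) Filter.atTop
      (nhds (y * ((Set.Ioo (-1 : ℝ) 1).indicator 1 y - 0))) := by
    exact (tendsto_const_nhds.sub h1).const_mul y
  simpa [fz, Set.indicator_of_mem hmem] using this

lemma abs_int_le {α : Type*} [MeasurableSpace α] {μ : Measure α} (f : α → ℝ) :
    |∫ y, f y ∂μ| ≤ ∫ y, |f y| ∂μ := by
  simpa [Real.norm_eq_abs] using norm_integral_le_integral_norm (μ := μ) f

/-- `supp ν ⊆ [0,∞)` iff `ν (Iio 0) = 0`. -/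
lemma supp_iff (ν : Measure ℝ) : measureSupport ν ⊆ Set.Ici 0 ↔ ν (Set.Iio 0) = 0 := by
  constructor
  · intro h
    have key : ∀ x : Set.Iio (0:ℝ), ∃ U : Set ℝ, IsOpen U ∧ (x:ℝ) ∈ U ∧ ν U = 0 := by
      rintro ⟨x, hx⟩
      by_contra hc
      push_neg at hc
      have hmem : x ∈ measureSupport ν := fun U hU hxU => hc U hU hxU
      exact absurd (h hmem) (by simpa using not_le.mpr hx)
    choose U hUo hUx hU0 using key
    obtain ⟨T, hTc, hTU⟩ := TopologicalSpace.isOpen_iUnion_countable U hUo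
    have hsub : Set.Iio (0:ℝ) ⊆ ⋃ x ∈ T, U x := by
      rw [hTU]
      intro y hy
      exact Set.mem_iUnion.mpr ⟨⟨y, hy⟩, hUx _⟩
    have hz : ν (⋃ x ∈ T, U x) = 0 := (measure_biUnion_null_iff hTc).mpr (fun i _ => hU0 i)
    exact measure_mono_null hsub hz
  · intro h x hx
    by_contra hx0
    simp only [Set.mem_Ici, not_le] at hx0
    exact hx (Set.Iio 0) isOpen_Iio (Set.mem_Iio.mpr hx0) h

end JprimeAux

set_option maxHeartbeats 1000000 in
open JprimeAux in
/-- `J′` is well defined and bounded on `[0,∞)` iff `q = 0`, `supp ν ⊆ [0,∞)` and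
`∫_{(0,∞)} y ν(dy) < ∞`. -/
theorem jprime_bounded_iff (ν : Measure ℝ) (a q : ℝ) (hq : 0 ≤ q)
    (hν : ∫⁻ y, ENNReal.ofReal (min (y ^ 2) 1) ∂ν < ⊤) :
    ((∀ z : ℝ, 0 ≤ z →
        Integrable (fun y => y * ((Set.Ioo (-1 : ℝ) 1).indicator 1 y - Real.exp (-(z * y)))) ν) ∧
      ∃ C : ℝ, ∀ z : ℝ, 0 ≤ z → |Jprime ν a q z| ≤ C) ↔
    (q = 0 ∧ measureSupport ν ⊆ Set.Ici 0 ∧ IntegrableOn (fun y => y) (Set.Ioi 0) ν) := by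
  have hfz : ∀ z : ℝ, (fun y => y * ((Set.Ioo (-1 : ℝ) 1).indicator 1 y - Real.exp (-(z * y))))
      = fz z := fun z => rfl
  constructor
  · rintro ⟨h1, C, hC⟩
    have h1' : ∀ z : ℝ, 0 ≤ z → Integrable (fz z) ν := by
      intro z hz; rw [← hfz]; exact h1 z hz
    -- integrability of the tail
    have hI1 : IntegrableOn (fun y : ℝ => y) (Set.Ici 1) ν := by
      have h0 : IntegrableOn (fz 0) (Set.Ici 1) ν := (h1' 0 le_rfl).integrableOn
      have heq : Set.EqOn (fz 0) (fun y : ℝ => -y) (Set.Ici 1) := by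
        intro y hy
        rw [fz_Ici_one hy]
        simp
      have hneg : IntegrableOn (fun y : ℝ => -y) (Set.Ici 1) ν :=
        h0.congr_fun heq measurableSet_Ici
      have h2 : IntegrableOn (fun y : ℝ => -(-y : ℝ)) (Set.Ici 1) ν := hneg.neg
      exact h2.congr_fun (fun y _ => neg_neg y) measurableSet_Ici
    set B : ℝ := C + |a| + ∫ y in Set.Ici 1, y ∂ν with hB_def
    have key : ∀ z : ℝ, 0 ≤ z →
        q * z + (∫ y in Set.Iio 0, fz z y ∂ν) + (∫ y in Set.Ioo 0 1, fz z y ∂ν) ≤ B := by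
      intro z hz
      have hint := h1' z hz
      have hsplit1 : (∫ y in Set.Iio 0, fz z y ∂ν) + (∫ y in Set.Ici 0, fz z y ∂ν)
          = ∫ y, fz z y ∂ν := by
        have h := integral_add_compl (measurableSet_Iio : MeasurableSet (Set.Iio (0:ℝ))) hint
        rwa [Set.compl_Iio] at h
      have hIci : Set.Ici (0:ℝ) = {0} ∪ Set.Ioi 0 := by
        ext x
        simp [le_iff_lt_or_eq, eq_comm, or_comm]
      have hsplit2 : ∫ y in Set.Ici 0, fz z y ∂ν
          = (∫ y in ({0} : Set ℝ), fz z y ∂ν) + ∫ y in Set.Ioi 0, fz z y ∂ν := by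
        rw [hIci]
        exact setIntegral_union (by simp) measurableSet_Ioi hint.integrableOn hint.integrableOn
      have hzero : (∫ y in ({0} : Set ℝ), fz z y ∂ν) = 0 := by
        have heq0 : Set.EqOn (fz z) (fun _ => (0:ℝ)) {0} := by
          intro y hy
          rw [Set.mem_singleton_iff] at hy
          rw [hy, fz_zero]
        rw [setIntegral_congr_fun (measurableSet_singleton 0) heq0, integral_zero]
      have hsplit3 : ∫ y in Set.Ioi 0, fz z y ∂ν
          = (∫ y in Set.Ioo 0 1, fz z y ∂ν) + ∫ y in Set.Ici 1, fz z y ∂ν := by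
        rw [← Set.Ioo_union_Ici_eq_Ioi (by norm_num : (0:ℝ) < 1)]
        exact setIntegral_union
          (Set.disjoint_left.mpr fun y hy h1y => absurd hy.2 (not_lt.mpr h1y))
          measurableSet_Ici hint.integrableOn hint.integrableOn
      have htail : |∫ y in Set.Ici 1, fz z y ∂ν| ≤ ∫ y in Set.Ici 1, y ∂ν := by
        calc |∫ y in Set.Ici 1, fz z y ∂ν| ≤ ∫ y in Set.Ici 1, |fz z y| ∂ν :=
            abs_int_le _
          _ ≤ ∫ y in Set.Ici 1, y ∂ν :=
            setIntegral_mono_on hint.integrableOn.abs hI1 measurableSet_Ici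
              (fun y hy => abs_fz_le hz (le_trans zero_le_one (Set.mem_Ici.mp hy)))
      have hJ : |Jprime ν a q z| ≤ C := hC z hz
      have hJeq : Jprime ν a q z = -a + q * z + ∫ y, fz z y ∂ν := rfl
      rw [hJeq] at hJ
      have hJ2 := (abs_le.mp hJ).2
      have ht2 := (abs_le.mp htail).1
      have ha := le_abs_self a
      linarith
    have hIio_nonneg : ∀ z : ℝ, 0 ≤ z → 0 ≤ ∫ y in Set.Iio 0, fz z y ∂ν :=
      fun z hz => setIntegral_nonneg measurableSet_Iio (fun y hy => fz_nonneg_neg hz hy)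
    have hIoo_nonneg : ∀ z : ℝ, 0 ≤ z → 0 ≤ ∫ y in Set.Ioo 0 1, fz z y ∂ν :=
      fun z hz => setIntegral_nonneg measurableSet_Ioo (fun y hy => fz_nonneg_pos hz hy)
    -- q = 0
    have hq0 : q = 0 := by
      by_contra hq'
      have hqpos : 0 < q := lt_of_le_of_ne hq (Ne.symm hq')
      have hzz : (0:ℝ) ≤ (|B| + 1) / q := by positivity
      have hk := key _ hzz
      have hqz : q * ((|B| + 1)/q) = |B| + 1 := by field_simp
      have hB := le_abs_self B
      have hA := hIio_nonneg _ hzz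
      have hD := hIoo_nonneg _ hzz
      linarith
    -- no mass on the negatives
    have hnull : ν (Set.Iio 0) = 0 := by
      by_contra hne
      have hU : Set.Iio (0:ℝ) = ⋃ n : ℕ, Set.Iic (-(1/((n:ℝ)+1))) := by
        ext y
        simp only [Set.mem_Iio, Set.mem_iUnion, Set.mem_Iic]
        constructor
        · intro hy
          obtain ⟨n, hn⟩ := exists_nat_one_div_lt (neg_pos.mpr hy)
          exact ⟨n, by linarith⟩
        · rintro ⟨n, hn⟩
          have hp : (0:ℝ) < 1/((n:ℝ)+1) := by positivity
          linarith
      have hex : ∃ n : ℕ, ν (Set.Iic (-(1/((n:ℝ)+1)))) ≠ 0 := by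
        by_contra hall
        push_neg at hall
        exact hne (by rw [hU]; exact measure_iUnion_null hall)
      obtain ⟨n, hs0⟩ := hex
      set δ : ℝ := 1/((n:ℝ)+1) with hδ_def
      have hδ : 0 < δ := by positivity
      set s : Set ℝ := Set.Iic (-δ) with hs_def
      have hsfin : ν s < ⊤ := by
        by_contra htop
        push_neg at htop
        have htop' : ν s = ⊤ := top_le_iff.mp htop
        have hle : ENNReal.ofReal (min (δ^2) 1) * ν s
            ≤ ∫⁻ y, ENNReal.ofReal (min (y^2) 1) ∂ν := by
          calc ENNReal.ofReal (min (δ^2) 1) * ν s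
              = ∫⁻ _ in s, ENNReal.ofReal (min (δ^2) 1) ∂ν := (setLIntegral_const s _).symm
            _ ≤ ∫⁻ y in s, ENNReal.ofReal (min (y^2) 1) ∂ν := by
                apply setLIntegral_mono (((measurable_id.pow_const 2).min measurable_const).ennreal_ofReal)
                intro y hy
                apply ENNReal.ofReal_le_ofReal
                have hy' : y ≤ -δ := hy
                have hsq : δ^2 ≤ y^2 := by nlinarith
                exact min_le_min hsq le_rfl
            _ ≤ ∫⁻ y, ENNReal.ofReal (min (y^2) 1) ∂ν := setLIntegral_le_lintegral _ _
        have hc0 : ENNReal.ofReal (min (δ^2) 1) ≠ 0 := by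
          apply ne_of_gt
          apply ENNReal.ofReal_pos.mpr
          exact lt_min (by positivity) one_pos
        rw [htop', ENNReal.mul_top hc0] at hle
        rw [top_le_iff.mp hle] at hν
        exact lt_irrefl _ hν
      have hm : 0 < (ν s).toReal := ENNReal.toReal_pos hs0 hsfin.ne
      set m := (ν s).toReal with hm_def
      have hlow : ∀ z : ℝ, 0 ≤ z → (δ * Real.exp (z * δ) - 1) * m ≤ B := by
        intro z hz
        have hint := h1' z hz
        have e1 : (δ * Real.exp (z * δ) - 1) * m
            = ∫ _ in s, (δ * Real.exp (z * δ) - 1) ∂ν := by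
          rw [setIntegral_const, smul_eq_mul, measureReal_def, ← hm_def]; ring
        have e2 : (∫ _ in s, (δ * Real.exp (z * δ) - 1) ∂ν) ≤ ∫ y in s, fz z y ∂ν :=
          setIntegral_mono_on (integrableOn_const hsfin.ne) hint.integrableOn
            measurableSet_Iic (fun y hy => fz_lower hz hδ hy)
        have e3 : (∫ y in s, fz z y ∂ν) ≤ ∫ y in Set.Iio 0, fz z y ∂ν := by
          apply setIntegral_mono_set hint.integrableOn
          · exact (ae_restrict_iff' measurableSet_Iio).mpr
              (Filter.Eventually.of_forall (fun y hy => fz_nonneg_neg hz hy))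
          · exact HasSubset.Subset.eventuallyLE
              (fun y hy => lt_of_le_of_lt hy (neg_lt_zero.mpr hδ))
        have e4 := key z hz
        have e5 := hIoo_nonneg z hz
        have e6 : 0 ≤ q * z := mul_nonneg hq hz
        linarith
      set K : ℝ := max 1 ((B/m + 2)/δ) with hK_def
      have hK1 : (1:ℝ) ≤ K := le_max_left _ _
      have hKpos : 0 < K := lt_of_lt_of_le one_pos hK1
      have hzK : 0 ≤ Real.log K / δ := div_nonneg (Real.log_nonneg hK1) hδ.le
      have hexp : Real.exp ((Real.log K / δ) * δ) = K := by
        rw [div_mul_cancel₀ _ (ne_of_gt hδ), Real.exp_log hKpos]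
      have hlow' := hlow _ hzK
      rw [hexp] at hlow'
      have hK2 : (B/m + 2)/δ ≤ K := le_max_right _ _
      have hδK : B/m + 2 ≤ K * δ := (div_le_iff₀ hδ).mp hK2
      have hBm : B/m * m = B := div_mul_cancel₀ B (ne_of_gt hm)
      have hmul : (B/m + 1) * m ≤ (δ * K - 1) * m :=
        mul_le_mul_of_nonneg_right (by linarith) hm.le
      have hexpand : (B/m + 1) * m = B + m := by rw [add_mul, hBm, one_mul]
      linarith
    have hsupp : measureSupport ν ⊆ Set.Ici 0 := (supp_iff ν).mpr hnull
    -- integrability on (0,1) via monotone convergence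
    have hIoo_fin : ∫⁻ y in Set.Ioo (0:ℝ) 1, ENNReal.ofReal y ∂ν < ⊤ := by
      have hFmeas : ∀ n : ℕ, Measurable (fun y => ENNReal.ofReal (fz n y)) :=
        fun n => (fz_measurable n).ennreal_ofReal
      have hFmono : Monotone (fun (n:ℕ) (y:ℝ) => ENNReal.ofReal (fz n y)) := by
        intro n k hnk y
        exact ENNReal.ofReal_le_ofReal (fz_mono (by exact_mod_cast hnk) y)
      have hcongr : ∫⁻ y in Set.Ioo (0:ℝ) 1, ENNReal.ofReal y ∂ν
          = ∫⁻ y in Set.Ioo (0:ℝ) 1, ⨆ n : ℕ, ENNReal.ofReal (fz n y) ∂ν := by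
        apply setLIntegral_congr_fun measurableSet_Ioo
        intro y hy
        apply le_antisymm
        · apply le_of_tendsto
            (ENNReal.continuous_ofReal.continuousAt.tendsto.comp (fz_tendsto hy))
          exact Filter.Eventually.of_forall
            (fun k => le_iSup (fun n : ℕ => ENNReal.ofReal (fz n y)) k)
        · apply iSup_le
          intro k
          apply ENNReal.ofReal_le_ofReal
          have hmem : y ∈ Set.Ioo (-1:ℝ) 1 := ⟨by linarith [hy.1], hy.2⟩
          rw [fz, Set.indicator_of_mem hmem, Pi.one_apply]
          nlinarith [Real.exp_pos (-((k:ℝ)*y)), hy.1]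
      rw [hcongr, lintegral_iSup hFmeas hFmono]
      refine lt_of_le_of_lt ?_ (show ENNReal.ofReal (B+1) < ⊤ from ENNReal.ofReal_lt_top)
      apply iSup_le
      intro k
      have hzk : (0:ℝ) ≤ (k:ℝ) := Nat.cast_nonneg k
      have hint := h1' k hzk
      rw [← ofReal_integral_eq_lintegral_ofReal hint.integrableOn
        ((ae_restrict_iff' measurableSet_Ioo).mpr
          (Filter.Eventually.of_forall (fun y hy => fz_nonneg_pos hzk hy)))]
      apply ENNReal.ofReal_le_ofReal
      have e4 := key k hzk
      have e5 := hIio_nonneg k hzk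
      have e6 : 0 ≤ q * (k:ℝ) := mul_nonneg hq hzk
      linarith
    have hIoo_int : IntegrableOn (fun y : ℝ => y) (Set.Ioo 0 1) ν := by
      refine ⟨measurable_id.aestronglyMeasurable, ?_⟩
      refine (hasFiniteIntegral_iff_ofReal ((ae_restrict_iff' measurableSet_Ioo).mpr
        (Filter.Eventually.of_forall (fun y hy => hy.1.le)))).mpr ?_
      exact hIoo_fin
    have hIoi : IntegrableOn (fun y : ℝ => y) (Set.Ioi 0) ν := by
      rw [← Set.Ioo_union_Ici_eq_Ioi (by norm_num : (0:ℝ) < 1)]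
      exact hIoo_int.union hI1
    exact ⟨hq0, hsupp, hIoi⟩
  · rintro ⟨hq0, hsupp, hint⟩
    have hnull : ν (Set.Iio 0) = 0 := (supp_iff ν).mp hsupp
    have hae : ∀ᵐ y ∂ν, 0 ≤ y := by
      rw [ae_iff]
      have hset : {y : ℝ | ¬ 0 ≤ y} = Set.Iio 0 := by ext y; simp
      rw [hset]; exact hnull
    set g : ℝ → ℝ := (Set.Ioi 0).indicator (fun y => y) with hg_def
    have hg : Integrable g ν := hint.integrable_indicator measurableSet_Ioi
    have hbound : ∀ z : ℝ, 0 ≤ z → ∀ᵐ y ∂ν, ‖fz z y‖ ≤ g y := by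
      intro z hz
      filter_upwards [hae] with y hy
      rcases hy.lt_or_eq with hy' | hy'
      · rw [hg_def, Set.indicator_of_mem (Set.mem_Ioi.mpr hy')]
        rw [Real.norm_eq_abs]
        exact abs_fz_le hz hy
      · rw [← hy']
        simp [fz_zero, hg_def]
    have hI : ∀ z : ℝ, 0 ≤ z → Integrable (fz z) ν := fun z hz =>
      hg.mono' (fz_measurable z).aestronglyMeasurable (hbound z hz)
    refine ⟨fun z hz => by rw [hfz]; exact hI z hz, |a| + ∫ y, g y ∂ν, fun z hz => ?_⟩
    have h2 : |∫ y, fz z y ∂ν| ≤ ∫ y, g y ∂ν := by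
      calc |∫ y, fz z y ∂ν| ≤ ∫ y, |fz z y| ∂ν := abs_int_le _
        _ ≤ ∫ y, g y ∂ν := by
            apply integral_mono_ae (hI z hz).abs hg
            filter_upwards [hbound z hz] with y h
            simpa [Real.norm_eq_abs] using h
    have hJeq : Jprime ν a q z = -a + q * z + ∫ y, fz z y ∂ν := rfl
    rw [hJeq, hq0, zero_mul, add_zero]
    have h3 := (abs_le.mp h2).1
    have h4 := (abs_le.mp h2).2
    have h5 := le_abs_self a
    have h6 := neg_abs_le a
    rw [abs_le]
    constructor <;> linarith
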